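/- Let α ≥ 1 and β ≥ 0 be integers, let φ ∈ ℂ[X] with deg φ < α + β, let F ∈ ℂ[X,Y]² be a polynomial mapping, and let G ∈ ℂ[X,Y]² be the R-dual of F. Then deg G ≤ (β + 1)·deg F. -/

import Mathlib

open MvPolynomial Filter

abbrev PolyPair := MvPolynomial (Fin 2) ℂ × MvPolynomial (Fin 2) ℂ

noncomputable def eval2 (p : MvPolynomial (Fin 2) ℂ) (x y : ℂ) : ℂ :=
  MvPolynomial.eval ![x, y] p

noncomputable def jacDet (P Q : MvPolynomial (Fin 2) ℂ) : MvPolynomial (Fin 2) ℂ :=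
  pderiv 0 P * pderiv 1 Q - pderiv 1 P * pderiv 0 Q

noncomputable def polyMap (F : PolyPair) (p : ℂ × ℂ) : ℂ × ℂ :=
  (eval2 F.1 p.1 p.2, eval2 F.2 p.1 p.2)

/-- `F` is a Keller mapping: its Jacobian determinant is a nonzero constant. -/
def IsKeller (F : PolyPair) : Prop :=
  ∃ c : ℂ, c ≠ 0 ∧ jacDet F.1 F.2 = MvPolynomial.C c

/-- `(u₀,v₀)` is a singular point of the plane curve `{H = 0}`. -/
def IsSingularPoint (H : MvPolynomial (Fin 2) ℂ) (p : ℂ × ℂ) : Prop :=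
  eval2 H p.1 p.2 = 0 ∧ eval2 (pderiv 0 H) p.1 p.2 = 0 ∧ eval2 (pderiv 1 H) p.1 p.2 = 0

/-- `G` is the `R`-dual of `F`, where `R(x,y) = (x^{-α}, x^β y + x^{-α} φ(x))`. -/
def IsRDual (F G : PolyPair) (α β : ℕ) (φ : Polynomial ℂ) : Prop :=
  ∀ x : ℂ, x ≠ 0 → ∀ y : ℂ,
    polyMap G (x, y) = polyMap F ((x ^ α)⁻¹, x ^ β * y + (x ^ α)⁻¹ * Polynomial.eval x φ)

/-- `p` is an asymptotic value of `F` : a limit of `F` along a curve tending to infinity. -/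
def IsAsympValue (F : PolyPair) (p : ℂ × ℂ) : Prop :=
  ∃ γ : ℝ → ℂ × ℂ, Continuous γ ∧ Tendsto (fun t => ‖γ t‖) atTop atTop ∧
    Tendsto (fun t => polyMap F (γ t)) atTop (nhds p)

/-- `F` is a polynomial automorphism of `ℂ²`. -/
def IsPolyAuto (F : PolyPair) : Prop :=
  ∃ Finv : PolyPair, (∀ p, polyMap F (polyMap Finv p) = p) ∧
    (∀ p, polyMap Finv (polyMap F p) = p)

/-- the degree of the `R`-dual satisfies `deg G ≤ (β + 1)·deg F`. -/

lemma msum_fin2 (m : Fin 2 →₀ ℕ) : (m.sum fun _ e => e) = m 0 + m 1 := by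
  rw [Finsupp.sum_fintype]
  · simp [Fin.sum_univ_two]
  · intro; rfl

lemma totalDegree_le_degOf (p : MvPolynomial (Fin 2) ℂ) :
    p.totalDegree ≤ degreeOf 0 p + degreeOf 1 p := by
  apply Finset.sup_le
  intro m hm
  rw [msum_fin2]
  exact add_le_add (monomial_le_degreeOf 0 hm) (monomial_le_degreeOf 1 hm)

lemma degOf_X_pow_mul_self (i : Fin 2) (N : ℕ) (p : MvPolynomial (Fin 2) ℂ) (hp : p ≠ 0) :
    degreeOf i (X i ^ N * p) = degreeOf i p + N := by
  induction N with
  | zero => simp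
  | succ n ih =>
    have h1 : X i ^ (n+1) * p = (X i ^ n * p) * X i := by ring
    rw [h1, (degreeOf_mul_X_eq_degreeOf_add_one_iff i _).2
      (mul_ne_zero (pow_ne_zero _ (X_ne_zero i)) hp), ih]
    omega

lemma degOf_X_pow_mul_ne (i j : Fin 2) (hij : i ≠ j) (N : ℕ) (p : MvPolynomial (Fin 2) ℂ) :
    degreeOf i (X j ^ N * p) = degreeOf i p := by
  induction N with
  | zero => simp
  | succ n ih =>
    have h1 : X j ^ (n+1) * p = (X j ^ n * p) * X j := by ring
    rw [h1, degreeOf_mul_X_of_ne _ hij, ih]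

lemma eval_aeval_X0 (x y : ℂ) (φ : Polynomial ℂ) :
    MvPolynomial.eval ![x, y] (Polynomial.aeval (X 0 : MvPolynomial (Fin 2) ℂ) φ) = φ.eval x := by
  rw [Polynomial.aeval_def, Polynomial.eval₂_eq_sum, Polynomial.eval_eq_sum, Polynomial.sum,
    Polynomial.sum, map_sum]
  simp

lemma degOf0_aeval (φ : Polynomial ℂ) :
    degreeOf 0 (Polynomial.aeval (X 0 : MvPolynomial (Fin 2) ℂ) φ) ≤ φ.natDegree := by
  rw [Polynomial.aeval_def, Polynomial.eval₂_eq_sum, Polynomial.sum]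
  apply le_trans (degreeOf_sum_le _ _ _)
  apply Finset.sup_le
  intro n hn
  calc degreeOf 0 (C (φ.coeff n) * X 0 ^ n)
      ≤ degreeOf 0 (C (φ.coeff n) : MvPolynomial (Fin 2) ℂ)
        + degreeOf 0 ((X 0 : MvPolynomial (Fin 2) ℂ) ^ n) := degreeOf_mul_le _ _ _
    _ ≤ 0 + n * 1 := by
        refine add_le_add (le_of_eq (degreeOf_C _ _)) ?_
        apply le_trans (degreeOf_pow_le _ _ _)
        simp [degreeOf_X]
    _ ≤ φ.natDegree := by simpa using Polynomial.le_natDegree_of_mem_supp _ hn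

lemma degOf1_aeval (φ : Polynomial ℂ) :
    degreeOf 1 (Polynomial.aeval (X 0 : MvPolynomial (Fin 2) ℂ) φ) = 0 := by
  rw [Polynomial.aeval_def, Polynomial.eval₂_eq_sum, Polynomial.sum]
  apply Nat.le_zero.1
  apply le_trans (degreeOf_sum_le _ _ _)
  apply Finset.sup_le
  intro n hn
  calc degreeOf 1 (C (φ.coeff n) * X 0 ^ n)
      ≤ degreeOf 1 (C (φ.coeff n) : MvPolynomial (Fin 2) ℂ)
        + degreeOf 1 ((X 0 : MvPolynomial (Fin 2) ℂ) ^ n) := degreeOf_mul_le _ _ _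
    _ ≤ 0 := by
        have := degreeOf_pow_le (1 : Fin 2) (X 0 : MvPolynomial (Fin 2) ℂ) n
        simp [degreeOf_X] at this ⊢
        omega

lemma key_lemma (α β d : ℕ) (φ : Polynomial ℂ) (hφ : φ.natDegree < α + β)
    (P Gc : MvPolynomial (Fin 2) ℂ) (hP : P.totalDegree ≤ d)
    (h : ∀ x : ℂ, x ≠ 0 → ∀ y : ℂ,
      MvPolynomial.eval ![x, y] Gc =
        MvPolynomial.eval ![(x ^ α)⁻¹, x ^ β * y + (x ^ α)⁻¹ * Polynomial.eval x φ] P) :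
    Gc.totalDegree ≤ β * d + d := by
  set S : MvPolynomial (Fin 2) ℂ :=
    X 0 ^ (α + β) * X 1 + Polynomial.aeval (X 0) φ with hS
  set H : MvPolynomial (Fin 2) ℂ :=
    ∑ m ∈ P.support, C (coeff m P) * X 0 ^ (α * (d - (m 0 + m 1))) * S ^ (m 1) with hH
  -- support condition
  have hsupp : ∀ m ∈ P.support, m 0 + m 1 ≤ d := by
    intro m hm
    have := MvPolynomial.le_totalDegree hm
    rw [msum_fin2] at this
    omega
  -- evaluation of H
  have hevalS : ∀ x y : ℂ, MvPolynomial.eval ![x, y] S = x ^ (α + β) * y + φ.eval x := by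
    intro x y
    simp [hS, eval_aeval_X0]
  have hevalH : ∀ x y : ℂ, x ≠ 0 →
      MvPolynomial.eval ![x, y] H = x ^ (α * d) * MvPolynomial.eval ![x, y] Gc := by
    intro x y hx
    rw [h x hx y, hH, map_sum, eval_eq' _ P, Finset.mul_sum]
    apply Finset.sum_congr rfl
    intro m hm
    have hmd := hsupp m hm
    have hxα : x ^ α ≠ 0 := pow_ne_zero _ hx
    simp only [map_mul, map_pow, eval_C, eval_X, hevalS, Fin.prod_univ_two,
      Matrix.cons_val_zero, Matrix.cons_val_one, Matrix.head_cons]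
    have hv : x ^ β * y + (x ^ α)⁻¹ * φ.eval x
        = (x ^ α)⁻¹ * (x ^ (α + β) * y + φ.eval x) := by
      field_simp
      all_goals ring
    have hxp : x ^ (α * d) * (((x ^ α)⁻¹) ^ (m 0) * ((x ^ α)⁻¹) ^ (m 1)) =
        x ^ (α * (d - (m 0 + m 1))) := by
      rw [← pow_add, inv_pow, ← pow_mul, eq_comm, Nat.mul_sub,
        pow_sub₀ _ hx (Nat.mul_le_mul_left α hmd)]
      try ring
    rw [hv, mul_pow, ← hxp]
    try ring
  -- polynomial identity
  have hident : X 0 ^ (α * d) * Gc = H := by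
    have h0 : X 0 * (X 0 ^ (α * d) * Gc) = X 0 * H := by
      apply MvPolynomial.funext
      intro g
      have hg : g = ![g 0, g 1] := by
        funext i; fin_cases i <;> rfl
      rw [hg]
      simp only [map_mul, map_pow, eval_X, Matrix.cons_val_zero]
      rcases eq_or_ne (g 0) 0 with h0 | h0
      · rw [h0]; ring
      · rw [hevalH (g 0) (g 1) h0]
    exact mul_left_cancel₀ (X_ne_zero 0) h0
  -- degree bounds on S
  have dS0 : degreeOf 0 S ≤ α + β := by
    apply le_trans (degreeOf_add_le _ _ _)
    apply max_le
    · calc degreeOf 0 (X 0 ^ (α + β) * X 1 : MvPolynomial (Fin 2) ℂ)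
          ≤ degreeOf 0 ((X 0 : MvPolynomial (Fin 2) ℂ) ^ (α + β)) + degreeOf 0 (X 1 : MvPolynomial (Fin 2) ℂ) :=
            degreeOf_mul_le _ _ _
        _ ≤ (α + β) * 1 + 0 := by
            refine add_le_add (le_trans (degreeOf_pow_le _ _ _) ?_) ?_ <;> simp [degreeOf_X]
        _ ≤ α + β := by omega
    · exact le_trans (degOf0_aeval φ) (le_of_lt hφ)
  have dS1 : degreeOf 1 S ≤ 1 := by
    apply le_trans (degreeOf_add_le _ _ _)
    apply max_le
    · calc degreeOf 1 (X 0 ^ (α + β) * X 1 : MvPolynomial (Fin 2) ℂ)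
          ≤ degreeOf 1 ((X 0 : MvPolynomial (Fin 2) ℂ) ^ (α + β)) + degreeOf 1 (X 1 : MvPolynomial (Fin 2) ℂ) :=
            degreeOf_mul_le _ _ _
        _ ≤ (α + β) * 0 + 1 := by
            refine add_le_add (le_trans (degreeOf_pow_le _ _ _) ?_) ?_ <;> simp [degreeOf_X]
        _ ≤ 1 := by omega
    · rw [degOf1_aeval]; omega
  -- degree bounds on H
  have hH0 : degreeOf 0 H ≤ α * d + β * d := by
    rw [hH]
    apply le_trans (degreeOf_sum_le _ _ _)
    apply Finset.sup_le
    intro m hm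
    have hmd := hsupp m hm
    calc degreeOf 0 (C (coeff m P) * X 0 ^ (α * (d - (m 0 + m 1))) * S ^ m 1)
        ≤ degreeOf 0 (C (coeff m P) * X 0 ^ (α * (d - (m 0 + m 1))) : MvPolynomial (Fin 2) ℂ)
          + degreeOf 0 (S ^ m 1) := degreeOf_mul_le _ _ _
      _ ≤ (degreeOf 0 (C (coeff m P) : MvPolynomial (Fin 2) ℂ)
          + degreeOf 0 ((X 0 : MvPolynomial (Fin 2) ℂ) ^ (α * (d - (m 0 + m 1)))))
          + m 1 * degreeOf 0 S :=
          add_le_add (degreeOf_mul_le _ _ _) (degreeOf_pow_le _ _ _)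
      _ ≤ (0 + α * (d - (m 0 + m 1)) * 1) + m 1 * (α + β) := by
          refine add_le_add (add_le_add (le_of_eq (degreeOf_C _ _))
            (le_trans (degreeOf_pow_le _ _ _) ?_)) (Nat.mul_le_mul_left _ dS0)
          simp [degreeOf_X]
      _ ≤ α * d + β * d := by
          have h1 : (d - (m 0 + m 1)) + m 1 ≤ d := by omega
          have h2 : m 1 ≤ d := by omega
          calc (0 + α * (d - (m 0 + m 1)) * 1) + m 1 * (α + β)
              = α * ((d - (m 0 + m 1)) + m 1) + β * m 1 := by ring
            _ ≤ α * d + β * d := add_le_add (Nat.mul_le_mul_left _ h1) (Nat.mul_le_mul_left _ h2)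
  have hH1 : degreeOf 1 H ≤ d := by
    rw [hH]
    apply le_trans (degreeOf_sum_le _ _ _)
    apply Finset.sup_le
    intro m hm
    have hmd := hsupp m hm
    calc degreeOf 1 (C (coeff m P) * X 0 ^ (α * (d - (m 0 + m 1))) * S ^ m 1)
        ≤ degreeOf 1 (C (coeff m P) * X 0 ^ (α * (d - (m 0 + m 1))) : MvPolynomial (Fin 2) ℂ)
          + degreeOf 1 (S ^ m 1) := degreeOf_mul_le _ _ _
      _ ≤ (degreeOf 1 (C (coeff m P) : MvPolynomial (Fin 2) ℂ)
          + degreeOf 1 ((X 0 : MvPolynomial (Fin 2) ℂ) ^ (α * (d - (m 0 + m 1)))))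
          + m 1 * degreeOf 1 S :=
          add_le_add (degreeOf_mul_le _ _ _) (degreeOf_pow_le _ _ _)
      _ ≤ (0 + α * (d - (m 0 + m 1)) * 0) + m 1 * 1 := by
          refine add_le_add (add_le_add (le_of_eq (degreeOf_C _ _))
            (le_trans (degreeOf_pow_le _ _ _) ?_)) (Nat.mul_le_mul_left _ dS1)
          simp [degreeOf_X]
      _ ≤ d := by omega
  -- conclude
  rcases eq_or_ne Gc 0 with rfl | hGc
  · simp
  have e0 : degreeOf 0 Gc + α * d = degreeOf 0 H := by
    rw [← hident, degOf_X_pow_mul_self 0 (α * d) Gc hGc]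
  have e1 : degreeOf 1 Gc = degreeOf 1 H := by
    rw [← hident, degOf_X_pow_mul_ne 1 0 (by decide) (α * d) Gc]
  have := totalDegree_le_degOf Gc
  omega

theorem degree_of_dual (α β : ℕ) (hα : 1 ≤ α)
    (φ : Polynomial ℂ) (hφ : φ.natDegree < α + β)
    (F G : PolyPair) (hG : IsRDual F G α β φ) :
    max G.1.totalDegree G.2.totalDegree ≤
      (β + 1) * max F.1.totalDegree F.2.totalDegree := by
  simp only [IsRDual, polyMap, eval2, Prod.mk.injEq] at hG
  set d := max F.1.totalDegree F.2.totalDegree with hd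
  have key1 := key_lemma α β d φ hφ F.1 G.1 (le_max_left _ _)
    (fun x hx y => (hG x hx y).1)
  have key2 := key_lemma α β d φ hφ F.2 G.2 (le_max_right _ _)
    (fun x hx y => (hG x hx y).2)
  have : β * d + d = (β + 1) * d := by ring
  rw [this] at key1 key2
  exact max_le key1 key2
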